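/- arXiv:2010.01645 — 4 statements merged into one kernel-verified Lean document; each statement's English description precedes it below -/
import Mathlib

section
/- Let G = (V, E) be a finite graph with |V| ≥ 3k such that between any two disjoint subsets S1, S2 ⊆ V each of size at least k there is an edge joining them. Then G has a connected component containing at least |V| - k + 1 vertices. -/
open Finset

/-- If `|V| ≥ 3k` and every two disjoint vertex sets of size `k` are joined by an
edge, then the graph has a connected component with at least `|V| - k + 1` vertices. -/
theorem stmt_1 {V : Type*} [Fintype V] (G : SimpleGraph V) (k : ℕ)
    (hV : 3 * k ≤ Fintype.card V)
    (h : ∀ S1 S2 : Finset V, Disjoint S1 S2 → k ≤ S1.card → k ≤ S2.card →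
      ∃ u ∈ S1, ∃ v ∈ S2, G.Adj u v) :
    ∃ v : V, Fintype.card V - k + 1 ≤ ({u | G.Reachable v u} : Set V).ncard := by
  classical
  rcases Nat.eq_zero_or_pos k with hk | hk
  · subst hk
    obtain ⟨u, hu, -⟩ := h ∅ ∅ (by simp) (by simp) (by simp)
    simp at hu
  set n := Fintype.card V with hn
  by_cases hbig : ∃ v : V, k ≤ (univ.filter (fun u => G.Reachable v u)).card
  · obtain ⟨v, hv⟩ := hbig
    set C := univ.filter (fun u => G.Reachable v u) with hC
    have hlt : Cᶜ.card < k := by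
      by_contra hle
      push_neg at hle
      obtain ⟨u, hu, w, hw, hadj⟩ := h C Cᶜ disjoint_compl_right hv hle
      have hru : G.Reachable v u := by simpa [hC] using hu
      have hrw : ¬ G.Reachable v w := by simpa [hC] using hw
      exact hrw (hru.trans hadj.reachable)
    have hcc : Cᶜ.card = n - C.card := card_compl C
    have hcle : C.card ≤ n := card_le_univ C
    have hbound : n - k + 1 ≤ C.card := by omega
    refine ⟨v, ?_⟩
    have : ({u | G.Reachable v u} : Set V).ncard = C.card := by
      rw [Set.ncard_eq_toFinset_card']
      simp [hC]
    omega
  · push_neg at hbig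
    exfalso
    have key : ∀ m (S : Finset V), S.card ≤ m →
        (∀ u ∈ S, ∀ w, G.Reachable u w → w ∈ S) → k ≤ S.card → False := by
      intro m
      induction m with
      | zero => intro S hS _ hkS; omega
      | succ m ih =>
        intro S hS hcl hkS
        obtain ⟨v, hvS⟩ : S.Nonempty := card_pos.mp (lt_of_lt_of_le hk hkS)
        set C := univ.filter (fun u => G.Reachable v u) with hC
        have hvC : v ∈ C := mem_filter.mpr ⟨mem_univ v, SimpleGraph.Reachable.refl v⟩
        by_cases h2 : k ≤ (S \ C).card
        · refine ih (S \ C) ?_ ?_ h2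
          · have hss : S \ C ⊂ S := by
              refine Finset.ssubset_iff_of_subset (sdiff_subset) |>.mpr ⟨v, hvS, by simp [hvC]⟩
            have := card_lt_card hss
            omega
          · intro u hu w hrw
            rw [mem_sdiff] at hu ⊢
            refine ⟨hcl u hu.1 w hrw, fun hwC => hu.2 ?_⟩
            have hvw : G.Reachable v w := by simpa [hC] using hwC
            simp only [hC, mem_filter, mem_univ, true_and]
            exact hvw.trans hrw.symm
        · push_neg at h2
          have hCk : C.card < k := hbig v
          have hsub : S ⊆ (S \ C) ∪ C := by
            intro x hx
            by_cases hxC : x ∈ C <;> simp [hx, hxC]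
          have hS2 : S.card < 2 * k := by
            have := card_le_card hsub
            have := card_union_le (S \ C) C
            omega
          have hcomp : k ≤ Sᶜ.card := by
            have hcc : Sᶜ.card = n - S.card := card_compl S
            omega
          obtain ⟨u, hu, w, hw, hadj⟩ := h S Sᶜ disjoint_compl_right hkS hcomp
          exact (mem_compl.mp hw) (hcl u hu w hadj.reachable)
    refine key n univ ?_ (fun u _ w _ => mem_univ w) ?_
    · simp [hn]
    · rw [card_univ]; omega
end

section
/- Let G = (V, E) be a finite graph with |V| ≥ 3k such that between any two disjoint subsets of size at least k there is an edge. Then for any subset S3 ⊆ V with |S3| ≥ k, some vertex v ∈ S3 belongs to a connected component of size at least |V| - k + 1. -/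
/-- If `|V| ≥ 3k` and every two disjoint vertex sets of size `k` are joined by an
edge, then every set of at least `k` vertices contains a vertex belonging to a
connected component of size at least `|V| - k + 1`. -/
theorem stmt_2 {V : Type*} [Fintype V] (G : SimpleGraph V) (k : ℕ) (hk : 0 < k)
    (hV : 3 * k ≤ Fintype.card V)
    (h : ∀ S1 S2 : Finset V, Disjoint S1 S2 → k ≤ S1.card → k ≤ S2.card →
      ∃ u ∈ S1, ∃ v ∈ S2, G.Adj u v) :
    ∀ S3 : Finset V, k ≤ S3.card →
      ∃ v ∈ S3, Fintype.card V - k + 1 ≤ ({u | G.Reachable v u} : Set V).ncard := by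
  classical
  intro S3 hS3
  set n := Fintype.card V with hn
  let C : V → Finset V := fun v => Finset.univ.filter (fun u => G.Reachable v u)
  have hCmem : ∀ v, v ∈ C v := fun v =>
    Finset.mem_filter.mpr ⟨Finset.mem_univ v, SimpleGraph.Reachable.refl v⟩
  have hCclosed : ∀ v u w, u ∈ C v → G.Adj u w → w ∈ C v := by
    intro v u w hu hadj
    simp only [C, Finset.mem_filter, Finset.mem_univ, true_and] at hu ⊢
    exact hu.trans hadj.reachable
  have hCcard : ∀ v, (C v).card = ({u | G.Reachable v u} : Set V).ncard := by
    intro v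
    rw [Set.ncard_eq_toFinset_card']
    congr 1
    ext u; simp [C]
  have key : ∀ W : Finset V, (∀ u ∈ W, ∀ w, G.Adj u w → w ∈ W) →
      k ≤ W.card → n - k + 1 ≤ W.card := by
    intro W hclosed hWk
    by_contra hlt
    push_neg at hlt
    have hcc := Finset.card_compl W
    have hcompl : k ≤ Wᶜ.card := by omega
    obtain ⟨u, hu, w, hw, hadj⟩ := h W Wᶜ disjoint_compl_right hWk hcompl
    exact (Finset.mem_compl.mp hw) (hclosed u hu w hadj)
  by_cases hbig : ∃ v ∈ S3, k ≤ (C v).card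
  · obtain ⟨v, hv, hvk⟩ := hbig
    refine ⟨v, hv, ?_⟩
    rw [← hCcard]
    exact key (C v) (fun u hu w => hCclosed v u w hu) hvk
  · push_neg at hbig
    exfalso
    have hS3sub : S3 ⊆ S3.biUnion C := fun v hv => Finset.mem_biUnion.mpr ⟨v, hv, hCmem v⟩
    have hS3k : k ≤ (S3.biUnion C).card := le_trans hS3 (Finset.card_le_card hS3sub)
    obtain ⟨T, hT, hTmin⟩ := Finset.exists_min_image
      ((S3.powerset).filter (fun T => k ≤ (T.biUnion C).card)) Finset.card
      ⟨S3, by simp [hS3k]⟩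
    simp only [Finset.mem_filter, Finset.mem_powerset] at hT
    obtain ⟨hTsub, hTk⟩ := hT
    have hTne : T.Nonempty := by
      rcases T.eq_empty_or_nonempty with rfl | h'
      · simp at hTk; omega
      · exact h'
    obtain ⟨t, ht⟩ := hTne
    have hTpos : 0 < T.card := Finset.card_pos.mpr ⟨t, ht⟩
    have herase : ((T.erase t).biUnion C).card < k := by
      by_contra hc
      push_neg at hc
      have h1 := hTmin (T.erase t) (by
        simp only [Finset.mem_filter, Finset.mem_powerset]
        exact ⟨(Finset.erase_subset _ _).trans hTsub, hc⟩)
      have h2 := Finset.card_erase_of_mem ht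
      omega
    have hsplit : T.biUnion C ⊆ (T.erase t).biUnion C ∪ C t := by
      intro x hx
      obtain ⟨v, hv, hxv⟩ := Finset.mem_biUnion.mp hx
      by_cases hvt : v = t
      · subst hvt; exact Finset.mem_union_right _ hxv
      · exact Finset.mem_union_left _
          (Finset.mem_biUnion.mpr ⟨v, Finset.mem_erase.mpr ⟨hvt, hv⟩, hxv⟩)
    have hcard2 : (T.biUnion C).card < 2 * k := by
      have h1 := Finset.card_le_card hsplit
      have h2 := Finset.card_union_le ((T.erase t).biUnion C) (C t)
      have h3 := hbig t (hTsub ht)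
      omega
    have hclosedW : ∀ u ∈ T.biUnion C, ∀ w, G.Adj u w → w ∈ T.biUnion C := by
      intro u hu w hadj
      obtain ⟨v, hv, huv⟩ := Finset.mem_biUnion.mp hu
      exact Finset.mem_biUnion.mpr ⟨v, hv, hCclosed v u w huv hadj⟩
    have hfin := key _ hclosedW hTk
    omega
end

section
/- Let G = (V, E) be a finite graph with |V| ≥ 3k such that between any two disjoint subsets of size at least k there is an edge. Then for any subset S3 ⊆ V with |S3| ≥ k, there exists a vertex v ∈ S3 such that G contains a simple path starting at v on at least |V| - 2k vertices. -/
set_option linter.unusedSectionVars false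
set_option linter.unusedVariables false
set_option maxHeartbeats 1600000

open Finset

section Reach
variable {V : Type*} [Fintype V] [DecidableEq V] (G : SimpleGraph V)

/-- one adjacency step inside a finset -/
def stepIn (R : Finset V) (a b : V) : Prop := a ∈ R ∧ b ∈ R ∧ G.Adj a b

/-- reachability inside a finset -/
def reachIn (R : Finset V) (a b : V) : Prop := Relation.ReflTransGen (stepIn G R) a b

open scoped Classical in
/-- the connected component of `y` inside `R` -/
noncomputable def compIn (R : Finset V) (y : V) : Finset V :=
  R.filter (fun z => reachIn G R y z)

variable {G}

lemma stepIn_symm {R : Finset V} {a b : V} (h : stepIn G R a b) : stepIn G R b a :=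
  ⟨h.2.1, h.1, h.2.2.symm⟩

lemma reachIn_symm {R : Finset V} {a b : V} (h : reachIn G R a b) : reachIn G R b a := by
  induction h with
  | refl => exact Relation.ReflTransGen.refl
  | tail _ hbc ih => exact Relation.ReflTransGen.head (stepIn_symm hbc) ih

lemma reachIn_mono {R R' : Finset V} (hRR : R ⊆ R') {a b : V} (h : reachIn G R a b) :
    reachIn G R' a b := by
  induction h with
  | refl => exact Relation.ReflTransGen.refl
  | tail _ hbc ih => exact ih.tail ⟨hRR hbc.1, hRR hbc.2.1, hbc.2.2⟩

lemma mem_compIn {R : Finset V} {y z : V} :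
    z ∈ compIn G R y ↔ z ∈ R ∧ reachIn G R y z := by
  classical
  simp [compIn]

lemma compIn_subset {R : Finset V} {y : V} : compIn G R y ⊆ R := by
  intro z hz; exact (mem_compIn.1 hz).1

lemma self_mem_compIn {R : Finset V} {y : V} (hy : y ∈ R) : y ∈ compIn G R y :=
  mem_compIn.2 ⟨hy, Relation.ReflTransGen.refl⟩

/-- components are adjacency-closed in `R` -/
lemma compIn_closed {R : Finset V} {y a b : V} (ha : a ∈ compIn G R y) (hb : b ∈ R)
    (hab : G.Adj a b) : b ∈ compIn G R y := by
  rcases mem_compIn.1 ha with ⟨haR, hr⟩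
  exact mem_compIn.2 ⟨hb, hr.tail ⟨haR, hb, hab⟩⟩

/-- no edges leave a component (within `R`) -/
lemma compIn_no_adj {R : Finset V} {y a b : V} (ha : a ∈ compIn G R y) (hb : b ∈ R)
    (hb' : b ∉ compIn G R y) (hab : G.Adj a b) : False :=
  hb' (compIn_closed ha hb hab)

/-- reachability from y stays inside the component of y -/
lemma reachIn_compIn {R : Finset V} {y z : V} (hy : y ∈ R) (h : reachIn G R y z) :
    reachIn G (compIn G R y) y z := by
  induction h with
  | refl => exact Relation.ReflTransGen.refl
  | @tail b c hyb hbc ih =>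
      have hbmem : b ∈ compIn G R y := mem_compIn.2 ⟨hbc.1, hyb⟩
      have hcmem : c ∈ compIn G R y := mem_compIn.2 ⟨hbc.2.1, hyb.tail hbc⟩
      exact ih.tail ⟨hbmem, hcmem, hbc.2.2⟩

/-- two vertices reachable from each other have the same component -/
lemma compIn_eq_of_reach {R : Finset V} {y w : V} (hw : w ∈ compIn G R y) :
    compIn G R w = compIn G R y := by
  rcases mem_compIn.1 hw with ⟨hwR, hyw⟩
  ext z
  simp only [mem_compIn]
  constructor
  · rintro ⟨hz, hwz⟩; exact ⟨hz, hyw.trans hwz⟩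
  · rintro ⟨hz, hyz⟩; exact ⟨hz, (reachIn_symm hyw).trans hyz⟩

lemma compIn_mono {D R : Finset V} (hDR : D ⊆ R) (a : V) :
    compIn G D a ⊆ compIn G R a := by
  intro z hz
  rcases mem_compIn.1 hz with ⟨hzD, hr⟩
  exact mem_compIn.2 ⟨hDR hzD, reachIn_mono hDR hr⟩

/-- from the invariant "everything reachable from x in insert x R", every z in R has a
    neighbor of x in its R-component reach: ∃ w ∈ R, G.Adj x w ∧ reachIn R w z -/
lemma exists_gate {R : Finset V} {x : V} (hx : x ∉ R) {z : V} (hz : z ∈ R)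
    (h : reachIn G (insert x R) x z) : ∃ w ∈ R, G.Adj x w ∧ reachIn G R w z := by
  have key : ∀ c : V, reachIn G (insert x R) x c →
      c = x ∨ ∃ w ∈ R, G.Adj x w ∧ reachIn G R w c := by
    intro c hc
    induction hc with
    | refl => exact Or.inl rfl
    | @tail b c hxb hbc ih =>
        have hcx : c = x ∨ c ∈ R := by
          rcases mem_insert.1 hbc.2.1 with h' | h'
          · exact Or.inl h'
          · exact Or.inr h'
        rcases hcx with rfl | hcR
        · exact Or.inl rfl
        · rcases ih with rfl | ⟨w, hwR, hadj, hr⟩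
          · exact Or.inr ⟨c, hcR, hbc.2.2, Relation.ReflTransGen.refl⟩
          · have hbR : b ∈ R := by
              rcases mem_insert.1 hbc.1 with h' | h'
              · subst h'
                exfalso
                -- b = x but reachIn R w b with w ∈ R means b ∈ R or b = w ∈ R
                rcases (Relation.ReflTransGen.cases_tail hr) with h2 | ⟨d, _, hdb⟩
                · exact hx (h2 ▸ hwR)
                · exact hx hdb.2.1
              · exact h'
            exact Or.inr ⟨w, hwR, hadj, hr.tail ⟨hbR, hcR, hbc.2.2⟩⟩
  rcases key z h with rfl | h'
  · exact absurd hz hx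
  · exact h'

end Reach


section Parts
variable {V : Type*} [DecidableEq V]

/-- union of the parts of a list -/
def partsUnion (L : List (Finset V × Finset V)) : Finset V :=
  L.foldr (fun pr s => pr.1 ∪ s) ∅

lemma partsUnion_nil : partsUnion ([] : List (Finset V × Finset V)) = ∅ := rfl

lemma partsUnion_cons (pr : Finset V × Finset V) (L : List (Finset V × Finset V)) :
    partsUnion (pr :: L) = pr.1 ∪ partsUnion L := rfl

lemma partsUnion_append (L1 L2 : List (Finset V × Finset V)) :
    partsUnion (L1 ++ L2) = partsUnion L1 ∪ partsUnion L2 := by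
  induction L1 with
  | nil => simp [partsUnion_nil, partsUnion]
  | cons pr L ih =>
      simp only [List.cons_append, partsUnion_cons, ih, union_assoc]

lemma mem_partsUnion {z : V} {L : List (Finset V × Finset V)} :
    z ∈ partsUnion L ↔ ∃ pr ∈ L, z ∈ pr.1 := by
  induction L with
  | nil => simp [partsUnion_nil]
  | cons pr L ih => simp [partsUnion_cons, ih]

end Parts


lemma endgame (k t : ℕ) (hk : 0 < k) (p cap : ℕ → ℕ) (hpos : ∀ i < t, 1 ≤ p i)
    (hcap : ∀ i < t, p i ≤ cap i)
    (hM : 2*k+1 ≤ ∑ i ∈ range t, p i) :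
    ∃ j < t, ∃ W : Finset ℕ, W ⊆ range j ∧
      k + (∑ i ∈ W, p i) ≤ ∑ i ∈ range (j+1), p i ∧
      k ≤ (∑ i ∈ W, p i) + cap j := by
  classical
  have ht : 0 < t := by
    rcases Nat.eq_zero_or_pos t with h0 | h
    · subst h0; simp at hM
    · exact h
  have hne : (∅ : Finset ℕ) ∈ (range t).powerset.filter
      (fun Y => (∑ i ∈ Y, p i) + k ≤ (∑ i ∈ range t, p i) ∧
        ∀ i ∈ Y, (∑ l ∈ range (i+1), p l) < (∑ i ∈ Y, p i) + k) := by
    simp only [mem_filter, mem_powerset]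
    refine ⟨empty_subset _, ?_, by simp⟩
    simp
    omega
  obtain ⟨Y, hYF, hYmax⟩ := Finset.exists_max_image _ (fun Y => ∑ i ∈ Y, p i) ⟨∅, hne⟩
  rw [mem_filter, mem_powerset] at hYF
  obtain ⟨hYsub, hYM, hYlt⟩ := hYF
  -- the catcher set J
  have hJne : ((range t).filter (fun j => (∑ i ∈ Y, p i) + k ≤ ∑ l ∈ range (j+1), p l)).Nonempty := by
    refine ⟨t - 1, ?_⟩
    simp only [mem_filter, mem_range]
    have h1 : t - 1 + 1 = t := by omega
    rw [h1]
    exact ⟨by omega, hYM⟩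
  obtain ⟨j, hjJ, hjmin⟩ : ∃ j ∈ (range t).filter
      (fun j => (∑ i ∈ Y, p i) + k ≤ ∑ l ∈ range (j+1), p l),
      ∀ j' ∈ (range t).filter (fun j => (∑ i ∈ Y, p i) + k ≤ ∑ l ∈ range (j+1), p l), j ≤ j' :=
    ⟨_, Finset.min'_mem _ hJne, fun j' hj' => Finset.min'_le _ j' hj'⟩
  rw [mem_filter, mem_range] at hjJ
  obtain ⟨hjt, hjA⟩ := hjJ
  have hYlt_j : ∀ i ∈ Y, i < j := by
    intro i hi
    by_contra h
    push_neg at h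
    have hmono : (∑ l ∈ range (j+1), p l) ≤ ∑ l ∈ range (i+1), p l :=
      sum_le_sum_of_subset (range_subset_range.2 (by omega))
    have := hYlt i hi
    omega
  refine ⟨j, hjt, Y, fun i hi => mem_range.2 (hYlt_j i hi), by omega, ?_⟩
  by_contra hlt
  push_neg at hlt
  have hpj : p j ≤ cap j := hcap j hjt
  have hjY : j ∉ Y := fun h => lt_irrefl j (hYlt_j j h)
  have hsum' : (∑ i ∈ insert j Y, p i) = p j + ∑ i ∈ Y, p i := sum_insert hjY
  have hprev : (∑ l ∈ range j, p l) < (∑ i ∈ Y, p i) + k := by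
    rcases Nat.eq_zero_or_pos j with hj0 | hjpos
    · rw [hj0]; simp; omega
    · have hjm : ¬ ((∑ i ∈ Y, p i) + k ≤ ∑ l ∈ range ((j-1)+1), p l) := by
        intro hcontra
        have : j ≤ j - 1 := hjmin _ (mem_filter.2 ⟨mem_range.2 (by omega), hcontra⟩)
        omega
      have hrw : j - 1 + 1 = j := by omega
      rw [hrw] at hjm
      omega
  have hAj : (∑ l ∈ range (j+1), p l) = (∑ l ∈ range j, p l) + p j := sum_range_succ p j
  have hmemF : insert j Y ∈ (range t).powerset.filter
      (fun Y => (∑ i ∈ Y, p i) + k ≤ (∑ i ∈ range t, p i) ∧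
        ∀ i ∈ Y, (∑ l ∈ range (i+1), p l) < (∑ i ∈ Y, p i) + k) := by
    rw [mem_filter, mem_powerset]
    refine ⟨?_, ?_, ?_⟩
    · intro i hi
      rcases mem_insert.1 hi with rfl | hi'
      · exact mem_range.2 hjt
      · exact hYsub hi'
    · rw [hsum']; omega
    · intro i hi
      rcases mem_insert.1 hi with rfl | hi'
      · rw [hsum']; omega
      · have := hYlt i hi'
        rw [hsum']; omega
  have hcontra := hYmax _ hmemF
  rw [hsum'] at hcontra
  have := hpos j hjt
  omega

section Split
variable {V : Type*} [Fintype V] [DecidableEq V] {G : SimpleGraph V}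

lemma split_comps : ∀ (n : ℕ) (D F : Finset V), D.card ≤ n → Disjoint D F →
    (∀ a ∈ D, ∀ b ∈ F, ¬ G.Adj a b) →
    (∀ a ∈ D, (compIn G D a).card ≤ F.card) →
    ∃ L : List (Finset V × Finset V),
      (∀ pr ∈ L, pr.1.Nonempty ∧ pr.1 ⊆ D ∧ pr.2 ⊆ D ∪ F ∧ F ⊆ pr.2 ∧
        pr.1 ∩ pr.2 = ∅ ∧ pr.1.card ≤ pr.2.card ∧
        (∀ a ∈ pr.1, ∀ b ∈ pr.2, ¬ G.Adj a b)) ∧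
      List.Pairwise (fun a b => b.1 ⊆ a.2 ∧ b.2 ⊆ a.2) L ∧
      partsUnion L = D := by
  intro n
  induction n with
  | zero =>
      intro D F hcard _ _ _
      have : D = ∅ := card_eq_zero.1 (Nat.le_zero.1 hcard)
      exact ⟨[], by simp, by simp, by simp [partsUnion_nil, this]⟩
  | succ n ih =>
      intro D F hcard hdisj hnoadj hheavy
      rcases D.eq_empty_or_nonempty with rfl | ⟨a, ha⟩
      · exact ⟨[], by simp, by simp, by simp [partsUnion_nil]⟩
      · have hPD : compIn G D a ⊆ D := compIn_subset
        have haP : a ∈ compIn G D a := self_mem_compIn ha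
        have hss : D \ compIn G D a ⊂ D := by
          refine (ssubset_iff_of_subset sdiff_subset).2 ⟨a, ha, ?_⟩
          simp only [mem_sdiff, not_and, not_not]
          intro _; exact haP
        have hcard' : (D \ compIn G D a).card ≤ n := by
          have := card_lt_card hss; omega
        obtain ⟨L', hprops', hpair', hunion'⟩ := ih (D \ compIn G D a) F hcard'
          (disjoint_of_subset_left sdiff_subset hdisj)
          (fun a' ha' b hb => hnoadj a' (sdiff_subset ha') b hb)
          (fun a' ha' => le_trans (card_le_card (compIn_mono sdiff_subset a'))
            (hheavy a' (sdiff_subset ha')))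
        refine ⟨(compIn G D a, (D \ compIn G D a) ∪ F) :: L', ?_, ?_, ?_⟩
        · intro pr hpr
          rcases List.mem_cons.1 hpr with rfl | hpr'
          · refine ⟨⟨a, haP⟩, hPD, union_subset_union sdiff_subset (subset_refl F),
              subset_union_right, ?_, ?_, ?_⟩
            · rw [eq_empty_iff_forall_notMem]
              intro z hz
              rw [mem_inter, mem_union] at hz
              obtain ⟨hzP, hzD' | hzF⟩ := hz
              · exact (mem_sdiff.1 hzD').2 hzP
              · exact (disjoint_left.1 hdisj (hPD hzP)) hzF
            · exact le_trans (hheavy a ha) (card_le_card subset_union_right)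
            · intro p hp b hb
              rcases mem_union.1 hb with hb' | hb'
              · intro hadj
                exact (mem_sdiff.1 hb').2 (compIn_closed hp (sdiff_subset hb') hadj)
              · exact hnoadj p (hPD hp) b hb'
          · obtain ⟨h1, h2, h3, h4, h5, h6, h7⟩ := hprops' pr hpr'
            exact ⟨h1, h2.trans sdiff_subset, h3.trans
              (union_subset_union sdiff_subset (subset_refl F)), h4, h5, h6, h7⟩
        · refine List.Pairwise.cons ?_ hpair'
          intro pr' hpr'
          obtain ⟨_, h2, h3, _, _, _, _⟩ := hprops' pr' hpr'
          exact ⟨h2.trans subset_union_left, h3⟩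
        · rw [partsUnion_cons, hunion']
          exact union_sdiff_of_subset hPD
end Split

section Build
variable {V : Type*} [Fintype V] [DecidableEq V] {G : SimpleGraph V}

lemma build : ∀ (n : ℕ) (R : Finset V) (x : V), R.card ≤ n → x ∉ R →
    (∀ z ∈ R, reachIn G (insert x R) x z) →
    ∃ (u : V) (w : G.Walk x u) (L : List (Finset V × Finset V)),
      w.IsPath ∧
      (∀ pr ∈ L, pr.1.Nonempty ∧ pr.1 ⊆ R ∧ pr.2 ⊆ R ∧ pr.1 ∩ pr.2 = ∅ ∧
        pr.1.card ≤ pr.2.card ∧ (∀ a ∈ pr.1, ∀ b ∈ pr.2, ¬ G.Adj a b)) ∧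
      List.Pairwise (fun a b => b.1 ⊆ a.2 ∧ b.2 ⊆ a.2) L ∧
      w.support.toFinset = insert x R \ partsUnion L ∧
      partsUnion L ⊆ R := by
  intro n
  induction n with
  | zero =>
      intro R x hc hx _
      have hR : R = ∅ := card_eq_zero.1 (Nat.le_zero.1 hc)
      subst hR
      exact ⟨x, SimpleGraph.Walk.nil, [], SimpleGraph.Walk.IsPath.nil, by simp, by simp,
        by simp [partsUnion_nil], by simp [partsUnion_nil]⟩
  | succ n ih =>
      intro R x hc hx hinv
      classical
      rcases R.eq_empty_or_nonempty with rfl | ⟨z₀, hz₀⟩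
      · exact ⟨x, SimpleGraph.Walk.nil, [], SimpleGraph.Walk.IsPath.nil, by simp, by simp,
          by simp [partsUnion_nil], by simp [partsUnion_nil]⟩
      · have hNne : (R.filter (fun y => G.Adj x y)).Nonempty := by
          obtain ⟨w, hwR, hadj, _⟩ := exists_gate hx hz₀ (hinv z₀ hz₀)
          exact ⟨w, mem_filter.2 ⟨hwR, hadj⟩⟩
        obtain ⟨y, hyN, hymax⟩ := Finset.exists_max_image _ (fun y => (compIn G R y).card) hNne
        rw [mem_filter] at hyN
        obtain ⟨hyR, hxy⟩ := hyN
        have hheavy : ∀ z ∈ R, (compIn G R z).card ≤ (compIn G R y).card := by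
          intro z hz
          obtain ⟨w, hwR, hadj, hreach⟩ := exists_gate hx hz (hinv z hz)
          have hw : w ∈ compIn G R z := mem_compIn.2 ⟨hwR, reachIn_symm hreach⟩
          rw [← compIn_eq_of_reach hw]
          exact hymax w (mem_filter.2 ⟨hwR, hadj⟩)
        have hyO : y ∈ compIn G R y := self_mem_compIn hyR
        have hOR : compIn G R y ⊆ R := compIn_subset
        have hins : insert y ((compIn G R y).erase y) = compIn G R y := insert_erase hyO
        have hcard' : ((compIn G R y).erase y).card ≤ n := by
          have h1 : ((compIn G R y).erase y).card = (compIn G R y).card - 1 :=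
            card_erase_of_mem hyO
          have h2 : (compIn G R y).card ≤ R.card := card_le_card hOR
          have h3 : 0 < (compIn G R y).card := card_pos.2 ⟨y, hyO⟩
          omega
        have hy' : y ∉ (compIn G R y).erase y := notMem_erase y _
        have hinv' : ∀ z ∈ (compIn G R y).erase y,
            reachIn G (insert y ((compIn G R y).erase y)) y z := by
          intro z hz
          rw [hins]
          have hzO : z ∈ compIn G R y := mem_of_mem_erase hz
          exact reachIn_compIn hyR (mem_compIn.1 hzO).2
        obtain ⟨u, w', L', hpath', hprops', hpair', hsupp', hUL'⟩ :=
          ih ((compIn G R y).erase y) y hcard' hy' hinv'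
        have hDnoadj : ∀ a ∈ R \ compIn G R y, ∀ b ∈ compIn G R y, ¬ G.Adj a b := by
          intro a ha b hb hadj
          exact (mem_sdiff.1 ha).2 (compIn_closed hb (mem_sdiff.1 ha).1 hadj.symm)
        have hDheavy : ∀ a ∈ R \ compIn G R y,
            (compIn G (R \ compIn G R y) a).card ≤ (compIn G R y).card := by
          intro a ha
          exact le_trans (card_le_card (compIn_mono sdiff_subset a))
            (hheavy a (mem_sdiff.1 ha).1)
        obtain ⟨LD, hpropsD, hpairD, hunionD⟩ := split_comps (R \ compIn G R y).card
          (R \ compIn G R y) (compIn G R y) le_rfl sdiff_disjoint hDnoadj hDheavy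
        have hDO : (R \ compIn G R y) ∪ compIn G R y = R := sdiff_union_of_subset hOR
        have hR''O : (compIn G R y).erase y ⊆ compIn G R y := erase_subset y _
        have hxsup : x ∉ w'.support := by
          intro hmem
          have h1 : x ∈ (w'.support).toFinset := List.mem_toFinset.2 hmem
          rw [hsupp'] at h1
          have h2 := (mem_sdiff.1 h1).1
          rw [hins] at h2
          exact hx (hOR h2)
        refine ⟨u, SimpleGraph.Walk.cons hxy w', LD ++ L', hpath'.cons hxsup, ?_, ?_, ?_, ?_⟩
        · intro pr hpr
          rcases List.mem_append.1 hpr with hpr' | hpr'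
          · obtain ⟨h1, h2, h3, _, h5, h6, h7⟩ := hpropsD pr hpr'
            refine ⟨h1, h2.trans sdiff_subset, ?_, h5, h6, h7⟩
            rw [← hDO]; exact h3
          · obtain ⟨h1, h2, h3, h5, h6, h7⟩ := hprops' pr hpr'
            exact ⟨h1, h2.trans (hR''O.trans hOR), h3.trans (hR''O.trans hOR), h5, h6, h7⟩
        · rw [List.pairwise_append]
          refine ⟨hpairD, hpair', ?_⟩
          intro a haD b hbL'
          obtain ⟨_, _, _, hFa, _, _, _⟩ := hpropsD a haD
          obtain ⟨_, hb1, hb2, _, _, _⟩ := hprops' b hbL'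
          exact ⟨(hb1.trans hR''O).trans hFa, (hb2.trans hR''O).trans hFa⟩
        · rw [SimpleGraph.Walk.support_cons, List.toFinset_cons, hsupp',
            partsUnion_append, hunionD]
          rw [hins]
          ext z
          simp only [mem_insert, mem_sdiff, mem_union]
          constructor
          · rintro (rfl | ⟨hzO, hzU⟩)
            · refine ⟨Or.inl rfl, ?_⟩
              rintro (h | h)
              · exact hx h.1
              · exact hx (hOR (hR''O (hUL' h)))
            · refine ⟨Or.inr (hOR hzO), ?_⟩
              rintro (h | h)
              · exact h.2 hzO
              · exact hzU h
          · rintro ⟨rfl | hzR, hnot⟩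
            · exact Or.inl rfl
            · by_cases hzO : z ∈ compIn G R y
              · exact Or.inr ⟨hzO, fun h => hnot (Or.inr h)⟩
              · exact absurd (Or.inl ⟨hzR, hzO⟩) hnot
        · rw [partsUnion_append, hunionD]
          exact union_subset sdiff_subset (hUL'.trans (hR''O.trans hOR))
end Build

section Helpers
variable {V : Type*} [Fintype V] [DecidableEq V] {G : SimpleGraph V}

lemma sum_getD (L : List (Finset V × Finset V)) :
    ∑ i ∈ Finset.range L.length, ((L.getD i (∅,∅)).1).card
      = (L.map (fun pr => pr.1.card)).sum := by
  induction L with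
  | nil => simp
  | cons pr L ih =>
      rw [List.length_cons, Finset.sum_range_succ']
      simp only [List.getD_cons_succ, List.getD_cons_zero, List.map_cons, List.sum_cons]
      rw [ih]; omega

lemma partsUnion_card (L : List (Finset V × Finset V))
    (h : L.Pairwise (fun a b => Disjoint a.1 b.1)) :
    (partsUnion L).card = (L.map (fun pr => pr.1.card)).sum := by
  induction L with
  | nil => simp [partsUnion_nil]
  | cons pr L ih =>
      rw [partsUnion_cons]
      have hd : Disjoint pr.1 (partsUnion L) := by
        rw [disjoint_right]
        intro z hz hz'
        obtain ⟨pr', hpr', hzpr'⟩ := mem_partsUnion.1 hz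
        exact (disjoint_left.1 ((List.pairwise_cons.1 h).1 pr' hpr') hz') hzpr'
      rw [card_union_of_disjoint hd, ih (List.pairwise_cons.1 h).2]
      simp

lemma closed_reach {U : Finset V} (hU : ∀ a ∈ U, ∀ b, G.Adj a b → b ∈ U)
    {a z : V} (ha : a ∈ U) (hr : reachIn G univ a z) : z ∈ U := by
  induction hr with
  | refl => exact ha
  | @tail b c hab hbc ihb => exact hU b ihb c hbc.2.2

lemma closed_comp_subset {U : Finset V} (hU : ∀ a ∈ U, ∀ b, G.Adj a b → b ∈ U)
    {a : V} (ha : a ∈ U) : compIn G univ a ⊆ U :=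
  fun z hz => closed_reach hU ha (mem_compIn.1 hz).2

/-- the parts of a chain-list are pairwise disjoint -/
lemma chain_parts_disjoint (L : List (Finset V × Finset V))
    (hprops : ∀ pr ∈ L, pr.1 ∩ pr.2 = ∅)
    (hpair : List.Pairwise (fun a b => b.1 ⊆ a.2 ∧ b.2 ⊆ a.2) L) :
    L.Pairwise (fun a b => Disjoint a.1 b.1) := by
  apply List.Pairwise.imp_of_mem ?_ hpair
  intro a b hab hbb hr
  rw [disjoint_left]
  intro z hza hzb
  have : z ∈ a.1 ∩ a.2 := mem_inter.2 ⟨hza, hr.1 hzb⟩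
  rw [hprops a hab] at this
  exact absurd this (notMem_empty z)

end Helpers

section GetD
variable {V : Type*} [DecidableEq V]

lemma getD_eq_get' (L : List (Finset V × Finset V)) {n : ℕ} (h : n < L.length) :
    L.getD n (∅,∅) = L.get ⟨n, h⟩ := by
  simp [List.getD_eq_getElem?_getD, List.getElem?_eq_getElem h]

lemma getD_mem' (L : List (Finset V × Finset V)) {n : ℕ} (h : n < L.length) :
    L.getD n (∅,∅) ∈ L := by
  rw [getD_eq_get' L h]; exact L.get_mem _

end GetD

theorem stmt_3' {V : Type*} [Fintype V] (G : SimpleGraph V) (k : ℕ) (hk : 0 < k)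
    (hV : 3 * k ≤ Fintype.card V)
    (h : ∀ S1 S2 : Finset V, Disjoint S1 S2 → k ≤ S1.card → k ≤ S2.card →
      ∃ u ∈ S1, ∃ v ∈ S2, G.Adj u v) :
    ∀ S3 : Finset V, k ≤ S3.card →
      ∃ v ∈ S3, ∃ (u : V) (w : G.Walk v u), w.IsPath ∧
        Fintype.card V - 2 * k ≤ w.support.length := by
  classical
  intro S3 hS3
  have hVne : (univ : Finset V).Nonempty := by
    rw [← card_pos, card_univ]; omega
  obtain ⟨z0, -, hz0max⟩ := Finset.exists_max_image univ (fun z => (compIn G univ z).card) hVne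
  -- Step 1: find v ∈ S3 in the largest component
  have hS3C : ∃ v ∈ S3, v ∈ compIn G univ z0 := by
    by_contra hcon
    push_neg at hcon
    by_cases hCk : k ≤ (compIn G univ z0).card
    · have hdisj : Disjoint S3 (compIn G univ z0) := by
        rw [disjoint_left]; exact fun {a} ha hb => hcon a ha hb
      obtain ⟨a, ha, b, hb, hadj⟩ := h S3 (compIn G univ z0) hdisj hS3 hCk
      exact hcon a ha (compIn_closed hb (mem_univ a) hadj.symm)
    · push_neg at hCk
      have hunivmem : (univ : Finset V) ∈ univ.powerset.filter
          (fun U => k ≤ U.card ∧ ∀ a ∈ U, ∀ b, G.Adj a b → b ∈ U) := by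
        rw [mem_filter, mem_powerset, card_univ]
        exact ⟨subset_univ _, by omega, fun a _ b _ => mem_univ b⟩
      obtain ⟨U, hUmem, hUmin⟩ := Finset.exists_min_image _ (fun U => U.card) ⟨_, hunivmem⟩
      rw [mem_filter] at hUmem
      obtain ⟨-, hUk, hUcl⟩ := hUmem
      obtain ⟨a, haU⟩ : U.Nonempty := card_pos.1 (by omega)
      have hane : a ∈ compIn G univ a := self_mem_compIn (mem_univ a)
      have hU'cl : ∀ x ∈ U \ compIn G univ a, ∀ b, G.Adj x b → b ∈ U \ compIn G univ a := by
        intro x hx b hadj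
        rw [mem_sdiff] at hx ⊢
        exact ⟨hUcl x hx.1 b hadj, fun hbC => hx.2 (compIn_closed hbC (mem_univ x) hadj.symm)⟩
      have hU'lt : (U \ compIn G univ a).card < k := by
        by_contra hge
        push_neg at hge
        have hmem' : U \ compIn G univ a ∈ univ.powerset.filter
            (fun U => k ≤ U.card ∧ ∀ a ∈ U, ∀ b, G.Adj a b → b ∈ U) :=
          mem_filter.2 ⟨mem_powerset.2 (subset_univ _), hge, hU'cl⟩
        have hmin := hUmin _ hmem'
        have hlt : (U \ compIn G univ a).card < U.card := by
          apply card_lt_card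
          refine (ssubset_iff_of_subset sdiff_subset).2 ⟨a, haU, ?_⟩
          simp only [mem_sdiff, not_and, not_not]
          exact fun _ => hane
        omega
      have hUcard : U.card ≤ 2*k - 2 := by
        have h1 : U.card ≤ (U \ compIn G univ a).card + (compIn G univ a).card :=
          card_le_card_sdiff_add_card
        have h2 : (compIn G univ a).card ≤ (compIn G univ z0).card := hz0max a (mem_univ a)
        omega
      have hcompl : k ≤ (univ \ U).card := by
        rw [card_sdiff_of_subset (subset_univ U), card_univ]
        omega
      obtain ⟨a', ha', b', hb', hadj⟩ := h U (univ \ U) disjoint_sdiff hUk hcompl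
      exact (mem_sdiff.1 hb').2 (hUcl a' ha' b' hadj)
  obtain ⟨v, hvS3, hvC⟩ := hS3C
  have hvC_eq : compIn G univ v = compIn G univ z0 := compIn_eq_of_reach hvC
  have hvv : v ∈ compIn G univ v := self_mem_compIn (mem_univ v)
  -- Step 2: build the path inside the component of v
  have hins : insert v ((compIn G univ v).erase v) = compIn G univ v := insert_erase hvv
  have hinv : ∀ z ∈ (compIn G univ v).erase v,
      reachIn G (insert v ((compIn G univ v).erase v)) v z := by
    intro z hz
    rw [hins]
    exact reachIn_compIn (mem_univ v) (mem_compIn.1 (mem_of_mem_erase hz)).2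
  obtain ⟨u, w, L', hpath, hprops', hpair', hsupp, hUL'⟩ :=
    build ((compIn G univ v).erase v).card ((compIn G univ v).erase v) v le_rfl
      (notMem_erase v _) hinv
  -- Step 3: split off the other components
  have hDnoadj : ∀ a ∈ univ \ compIn G univ v, ∀ b ∈ compIn G univ v, ¬ G.Adj a b := by
    intro a ha b hb hadj
    exact (mem_sdiff.1 ha).2 (compIn_closed hb (mem_univ a) hadj.symm)
  have hDheavy : ∀ a ∈ univ \ compIn G univ v,
      (compIn G (univ \ compIn G univ v) a).card ≤ (compIn G univ v).card := by
    intro a ha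
    refine le_trans (card_le_card (compIn_mono (subset_univ _) a)) ?_
    rw [hvC_eq]
    exact hz0max a (mem_univ a)
  obtain ⟨LD, hpropsD, hpairD, hunionD⟩ := split_comps (univ \ compIn G univ v).card
    (univ \ compIn G univ v) (compIn G univ v) le_rfl sdiff_disjoint hDnoadj hDheavy
  have hR''C : (compIn G univ v).erase v ⊆ compIn G univ v := erase_subset _ _
  -- the combined list
  have hprops : ∀ pr ∈ LD ++ L', pr.1.Nonempty ∧ pr.1 ∩ pr.2 = ∅ ∧ pr.1.card ≤ pr.2.card ∧
      (∀ a ∈ pr.1, ∀ b ∈ pr.2, ¬ G.Adj a b) := by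
    intro pr hpr
    rcases List.mem_append.1 hpr with h' | h'
    · obtain ⟨h1, _, _, _, h5, h6, h7⟩ := hpropsD pr h'
      exact ⟨h1, h5, h6, h7⟩
    · obtain ⟨h1, _, _, h5, h6, h7⟩ := hprops' pr h'
      exact ⟨h1, h5, h6, h7⟩
  have hpair : List.Pairwise (fun a b => b.1 ⊆ a.2 ∧ b.2 ⊆ a.2) (LD ++ L') := by
    rw [List.pairwise_append]
    refine ⟨hpairD, hpair', ?_⟩
    intro a haD b hbL'
    obtain ⟨_, _, _, hFa, _, _, _⟩ := hpropsD a haD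
    obtain ⟨_, hb1, hb2, _, _, _⟩ := hprops' b hbL'
    exact ⟨(hb1.trans hR''C).trans hFa, (hb2.trans hR''C).trans hFa⟩
  have hdisjointparts : (LD ++ L').Pairwise (fun a b => Disjoint a.1 b.1) :=
    chain_parts_disjoint _ (fun pr hpr => (hprops pr hpr).2.1) hpair
  have hunionL : partsUnion (LD ++ L') = (univ \ compIn G univ v) ∪ partsUnion L' := by
    rw [partsUnion_append, hunionD]
  have hsuppdisj : Disjoint (w.support.toFinset) (partsUnion (LD ++ L')) := by
    rw [hsupp, hins, hunionL, disjoint_left]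
    intro z hz hz'
    rw [mem_sdiff] at hz
    rcases mem_union.1 hz' with h' | h'
    · exact (mem_sdiff.1 h').2 hz.1
    · exact hz.2 h'
  have hcover : w.support.toFinset ∪ partsUnion (LD ++ L') = univ := by
    rw [hsupp, hins, hunionL]
    ext z
    simp only [mem_union, mem_sdiff, mem_univ, iff_true]
    by_cases hzC : z ∈ compIn G univ v
    · by_cases hzU : z ∈ partsUnion L'
      · exact Or.inr (Or.inr hzU)
      · exact Or.inl ⟨hzC, hzU⟩
    · exact Or.inr (Or.inl ⟨trivial, hzC⟩)
  have hcount : w.support.toFinset.card + (partsUnion (LD ++ L')).card = Fintype.card V := by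
    rw [← card_union_of_disjoint hsuppdisj, hcover, card_univ]
  have hMcard : (partsUnion (LD ++ L')).card = ((LD ++ L').map (fun pr => pr.1.card)).sum :=
    partsUnion_card _ hdisjointparts
  have hlen : w.support.length = w.support.toFinset.card :=
    (List.toFinset_card_of_nodup hpath.support_nodup).symm
  by_cases hM : (partsUnion (LD ++ L')).card ≤ 2*k
  · exact ⟨v, hvS3, u, w, hpath, by omega⟩
  · exfalso
    push_neg at hM
    have hMsum : 2*k+1 ≤ ∑ i ∈ Finset.range (LD ++ L').length,
        (((LD ++ L').getD i (∅,∅)).1).card := by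
      rw [sum_getD, ← hMcard]; omega
    obtain ⟨j, hjt, W, hWsub, hW1, hW2⟩ := endgame k (LD ++ L').length hk
      (fun i => (((LD ++ L').getD i (∅,∅)).1).card)
      (fun i => (((LD ++ L').getD i (∅,∅)).2).card)
      (fun i hi => card_pos.2 ((hprops _ (getD_mem' _ hi)).1))
      (fun i hi => (hprops _ (getD_mem' _ hi)).2.2.1)
      hMsum
    have hchain_idx : ∀ i i' : ℕ, ∀ _ : i < (LD ++ L').length, ∀ _ : i' < (LD ++ L').length,
        i < i' → ((LD ++ L').getD i' (∅,∅)).1 ⊆ ((LD ++ L').getD i (∅,∅)).2 ∧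
          ((LD ++ L').getD i' (∅,∅)).2 ⊆ ((LD ++ L').getD i (∅,∅)).2 := by
      intro i i' hi hi' hii
      rw [getD_eq_get' _ hi, getD_eq_get' _ hi']
      exact List.pairwise_iff_get.1 hpair ⟨i, hi⟩ ⟨i', hi'⟩ hii
    have hdisj_idx : ∀ i i' : ℕ, ∀ _ : i < (LD ++ L').length, ∀ _ : i' < (LD ++ L').length,
        i ≠ i' → Disjoint ((LD ++ L').getD i (∅,∅)).1 ((LD ++ L').getD i' (∅,∅)).1 := by
      intro i i' hi hi' hne
      rcases lt_or_gt_of_ne hne with h' | h'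
      · rw [getD_eq_get' _ hi, getD_eq_get' _ hi']
        exact List.pairwise_iff_get.1 hdisjointparts ⟨i, hi⟩ ⟨i', hi'⟩ h'
      · rw [getD_eq_get' _ hi, getD_eq_get' _ hi']
        exact (List.pairwise_iff_get.1 hdisjointparts ⟨i', hi'⟩ ⟨i, hi⟩ h').symm
    have hWlen : ∀ i ∈ W, i < (LD ++ L').length := fun i hi =>
      lt_of_lt_of_le (mem_range.1 (hWsub hi)) (by omega)
    have hrlen : ∀ i ∈ Finset.range (j+1), i < (LD ++ L').length := fun i hi => by
      have := mem_range.1 hi; omega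
    have hcapT : k - (∑ i ∈ W, (((LD ++ L').getD i (∅,∅)).1).card)
        ≤ (((LD ++ L').getD j (∅,∅)).2).card := by omega
    obtain ⟨T, hTsub, hTcard⟩ := Finset.exists_subset_card_eq hcapT
    have hWrange : W ⊆ Finset.range (j+1) := by
      intro z hz; rw [mem_range] at *; have := mem_range.1 (hWsub hz); omega
    have hS1card : ((Finset.range (j+1) \ W).biUnion
        (fun i => ((LD ++ L').getD i (∅,∅)).1)).card
        = ∑ i ∈ Finset.range (j+1) \ W, (((LD ++ L').getD i (∅,∅)).1).card := by
      apply card_biUnion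
      intro i hi i' hi' hne
      exact hdisj_idx i i' (hrlen i (mem_sdiff.1 hi).1) (hrlen i' (mem_sdiff.1 hi').1) hne
    have hsum_sdiff : (∑ i ∈ Finset.range (j+1) \ W, (((LD ++ L').getD i (∅,∅)).1).card)
        + (∑ i ∈ W, (((LD ++ L').getD i (∅,∅)).1).card)
        = ∑ i ∈ Finset.range (j+1), (((LD ++ L').getD i (∅,∅)).1).card :=
      Finset.sum_sdiff hWrange
    have hS1k : k ≤ ((Finset.range (j+1) \ W).biUnion
        (fun i => ((LD ++ L').getD i (∅,∅)).1)).card := by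
      rw [hS1card]; omega
    have hTdisj : Disjoint (W.biUnion (fun i => ((LD ++ L').getD i (∅,∅)).1)) T := by
      rw [disjoint_left]
      intro z hz hzT
      obtain ⟨i, hiW, hzi⟩ := mem_biUnion.1 hz
      have hij : i < j := mem_range.1 (hWsub hiW)
      have hsub := (hchain_idx i j (hWlen i hiW) (by omega) hij).2
      have hmem : z ∈ ((LD ++ L').getD i (∅,∅)).1 ∩ ((LD ++ L').getD i (∅,∅)).2 :=
        mem_inter.2 ⟨hzi, hsub (hTsub hzT)⟩
      rw [(hprops _ (getD_mem' _ (hWlen i hiW))).2.1] at hmem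
      exact absurd hmem (notMem_empty z)
    have hWcard : (W.biUnion (fun i => ((LD ++ L').getD i (∅,∅)).1)).card
        = ∑ i ∈ W, (((LD ++ L').getD i (∅,∅)).1).card := by
      apply card_biUnion
      intro i hi i' hi' hne
      exact hdisj_idx i i' (hWlen i hi) (hWlen i' hi') hne
    have hS2k : k ≤ ((W.biUnion (fun i => ((LD ++ L').getD i (∅,∅)).1)) ∪ T).card := by
      rw [card_union_of_disjoint hTdisj, hWcard, hTcard]
      omega
    have hS12 : Disjoint ((Finset.range (j+1) \ W).biUnion
        (fun i => ((LD ++ L').getD i (∅,∅)).1))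
        ((W.biUnion (fun i => ((LD ++ L').getD i (∅,∅)).1)) ∪ T) := by
      rw [disjoint_left]
      intro z hz hz'
      obtain ⟨i, hiS, hzi⟩ := mem_biUnion.1 hz
      have hiR : i < (LD ++ L').length := hrlen i (mem_sdiff.1 hiS).1
      rcases mem_union.1 hz' with h' | h'
      · obtain ⟨i', hi'W, hzi'⟩ := mem_biUnion.1 h'
        have hne : i ≠ i' := fun heq => (mem_sdiff.1 hiS).2 (heq ▸ hi'W)
        exact (disjoint_left.1 (hdisj_idx i i' hiR (hWlen i' hi'W) hne) hzi) hzi'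
      · have hij : i ≤ j := by have := mem_range.1 (mem_sdiff.1 hiS).1; omega
        have hzT2 : z ∈ ((LD ++ L').getD i (∅,∅)).2 := by
          rcases eq_or_lt_of_le hij with rfl | hlt
          · exact hTsub h'
          · exact (hchain_idx i j hiR (by omega) hlt).2 (hTsub h')
        have hmem : z ∈ ((LD ++ L').getD i (∅,∅)).1 ∩ ((LD ++ L').getD i (∅,∅)).2 :=
          mem_inter.2 ⟨hzi, hzT2⟩
        rw [(hprops _ (getD_mem' _ hiR)).2.1] at hmem
        exact absurd hmem (notMem_empty z)
    obtain ⟨a, ha, b, hb, hadj⟩ := h _ _ hS12 hS1k hS2k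
    obtain ⟨i, hiS, hai⟩ := mem_biUnion.1 ha
    have hiR : i < (LD ++ L').length := hrlen i (mem_sdiff.1 hiS).1
    rcases mem_union.1 hb with h' | h'
    · obtain ⟨i', hi'W, hbi'⟩ := mem_biUnion.1 h'
      have hi'R : i' < (LD ++ L').length := hWlen i' hi'W
      have hne : i ≠ i' := fun heq => (mem_sdiff.1 hiS).2 (heq ▸ hi'W)
      rcases lt_or_gt_of_ne hne with hlt | hgt
      · exact (hprops _ (getD_mem' _ hiR)).2.2.2 a hai b
          ((hchain_idx i i' hiR hi'R hlt).1 hbi') hadj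
      · exact (hprops _ (getD_mem' _ hi'R)).2.2.2 b hbi' a
          ((hchain_idx i' i hi'R hiR hgt).1 hai) hadj.symm
    · have hij : i ≤ j := by have := mem_range.1 (mem_sdiff.1 hiS).1; omega
      have hbT2 : b ∈ ((LD ++ L').getD i (∅,∅)).2 := by
        rcases eq_or_lt_of_le hij with rfl | hlt
        · exact hTsub h'
        · exact (hchain_idx i j hiR (by omega) hlt).2 (hTsub h')
      exact (hprops _ (getD_mem' _ hiR)).2.2.2 a hai b hbT2 hadj

/-- If `|V| ≥ 3k` and every two disjoint vertex sets of size `k` are joined by an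
edge, then every set of at least `k` vertices contains a vertex from which there is
a simple path on at least `|V| - 2k` vertices. -/
theorem stmt_3 {V : Type*} [Fintype V] (G : SimpleGraph V) (k : ℕ) (hk : 0 < k)
    (hV : 3 * k ≤ Fintype.card V)
    (h : ∀ S1 S2 : Finset V, Disjoint S1 S2 → k ≤ S1.card → k ≤ S2.card →
      ∃ u ∈ S1, ∃ v ∈ S2, G.Adj u v) :
    ∀ S3 : Finset V, k ≤ S3.card →
      ∃ v ∈ S3, ∃ (u : V) (w : G.Walk v u), w.IsPath ∧
        Fintype.card V - 2 * k ≤ w.support.length := by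
  exact stmt_3' G k hk hV h
end

section
/- Let p ∈ (0,1) and c > 100, and set n = ⌈1.2c/p⌉ and k = ⌈0.1c/p⌉. In the Erdős–Rényi random graph G(n, p), the probability that there exist two disjoint vertex subsets of size k with no edge between them is at most (n choose k)·(n−k choose k)·(1−p)^{k²} ≤ ((12e)²·e^{−0.1c})^k ≤ e^{−30}. Consequently, with probability at least 1 − e^{−30}, G(n, p) contains a simple path on at least c/p vertices. -/
open MeasureTheory

open Finset
open scoped ENNReal NNReal

section DFS
variable {V : Type*} [DecidableEq V]

lemma dfs_aux' (G : SimpleGraph V) (N : ℕ) :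
    ∀ (S : Finset V) (T : List V) (U : Finset V),
    2 * U.card + T.length ≤ N →
    T.Chain' G.Adj → T.Nodup →
    (∀ v : V, v ∈ S ∨ v ∈ T ∨ v ∈ U) →
    Disjoint S U → (∀ v ∈ T, v ∉ S) → (∀ v ∈ T, v ∉ U) →
    (∀ a ∈ S, ∀ b ∈ U, ¬ G.Adj a b) →
    S.card ≤ U.card →
    ∃ (S' : Finset V) (T' : List V) (U' : Finset V),
      T'.Chain' G.Adj ∧ T'.Nodup ∧ (∀ v : V, v ∈ S' ∨ v ∈ T' ∨ v ∈ U') ∧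
      Disjoint S' U' ∧
      (∀ a ∈ S', ∀ b ∈ U', ¬ G.Adj a b) ∧ S'.card = U'.card := by
  induction N with
  | zero =>
    intro S T U hN hc hnd hcov hSU hTS hTU he hsz
    exact ⟨S, T, U, hc, hnd, hcov, hSU, he, le_antisymm hsz (by omega)⟩
  | succ N ih =>
    intro S T U hN hc hnd hcov hSU hTS hTU he hsz
    rcases eq_or_lt_of_le hsz with heq | hlt
    · exact ⟨S, T, U, hc, hnd, hcov, hSU, he, heq⟩
    have hUne : U.Nonempty := card_pos.mp (by omega)
    match T, hc, hnd with
    | [], _, _ =>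
      obtain ⟨u, hu⟩ := hUne
      refine ih S [u] (U.erase u) ?_ (List.isChain_singleton u) (List.nodup_singleton u)
        ?_ (hSU.mono_right (erase_subset u U)) ?_ ?_
        (fun a ha b hb => he a ha b (erase_subset u U hb)) ?_
      · have := card_erase_of_mem hu; simp at hN ⊢; omega
      · intro v; rcases hcov v with h | h | h
        · exact Or.inl h
        · simp at h
        · rcases eq_or_ne v u with rfl | hne
          · exact Or.inr (Or.inl (by simp))
          · exact Or.inr (Or.inr (mem_erase.mpr ⟨hne, h⟩))
      · intro v hv; simp at hv; subst hv
        exact fun hvS => (disjoint_left.mp hSU) hvS hu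
      · intro v hv; simp at hv; subst hv; exact notMem_erase _ _
      · have := card_erase_of_mem hu; omega
    | v :: T0, hc, hnd =>
      by_cases hnb : ∃ u ∈ U, G.Adj v u
      · obtain ⟨u, huU, hadj⟩ := hnb
        refine ih S (u :: v :: T0) (U.erase u) ?_ ?_ ?_ ?_
          (hSU.mono_right (erase_subset u U)) ?_ ?_
          (fun a ha b hb => he a ha b (erase_subset u U hb)) ?_
        · have := card_erase_of_mem huU; simp at hN ⊢; omega
        · exact List.isChain_cons_cons.mpr ⟨hadj.symm, hc⟩
        · exact List.nodup_cons.mpr ⟨fun h => hTU u h huU, hnd⟩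
        · intro w; rcases hcov w with h | h | h
          · exact Or.inl h
          · exact Or.inr (Or.inl (List.mem_cons_of_mem u h))
          · rcases eq_or_ne w u with rfl | hne
            · exact Or.inr (Or.inl List.mem_cons_self)
            · exact Or.inr (Or.inr (mem_erase.mpr ⟨hne, h⟩))
        · intro w hw; rcases List.mem_cons.mp hw with rfl | hw
          · exact fun hwS => (disjoint_left.mp hSU) hwS huU
          · exact hTS w hw
        · intro w hw; rcases List.mem_cons.mp hw with rfl | hw
          · exact notMem_erase w U
          · exact fun hmem => hTU w hw (erase_subset u U hmem)
        · have := card_erase_of_mem huU; omega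
      · push_neg at hnb
        have hvU : v ∉ U := hTU v List.mem_cons_self
        refine ih (insert v S) T0 U ?_ hc.tail hnd.of_cons ?_ ?_ ?_ ?_ ?_ ?_
        · simp at hN ⊢; omega
        · intro w; rcases hcov w with h | h | h
          · exact Or.inl (mem_insert_of_mem h)
          · rcases List.mem_cons.mp h with rfl | h
            · exact Or.inl (mem_insert_self _ _)
            · exact Or.inr (Or.inl h)
          · exact Or.inr (Or.inr h)
        · exact disjoint_left.mpr (fun a ha hb => by
            rcases mem_insert.mp ha with rfl | ha
            · exact hvU hb
            · exact (disjoint_left.mp hSU) ha hb)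
        · intro w hw hmem; rcases mem_insert.mp hmem with rfl | hmem
          · exact (List.nodup_cons.mp hnd).1 hw
          · exact hTS w (List.mem_cons_of_mem v hw) hmem
        · exact fun w hw => hTU w (List.mem_cons_of_mem v hw)
        · intro a ha b hb; rcases mem_insert.mp ha with rfl | ha
          · exact hnb b hb
          · exact he a ha b hb
        · have : (insert v S).card ≤ S.card + 1 := card_insert_le v S
          omega

lemma exists_walk_of_chain' (G : SimpleGraph V) :
    ∀ (l : List V) (u : V), List.Chain G.Adj u l → ∃ v, ∃ w : G.Walk u v, w.support = u :: l := by
  intro l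
  induction l with
  | nil => exact fun u _ => ⟨u, SimpleGraph.Walk.nil, rfl⟩
  | cons b t ih =>
    intro u h
    rcases h with _ | _ | ⟨hadj, hch⟩
    obtain ⟨v, w, hw⟩ := ih b ‹_›
    exact ⟨v, SimpleGraph.Walk.cons hadj w, by simp [hw]⟩

lemma long_path_of_k' [Fintype V] (G : SimpleGraph V) (k : ℕ)
    (hk2 : 2 * k ≤ Fintype.card V)
    (h : ∀ S1 S2 : Finset V, Disjoint S1 S2 → S1.card = k → S2.card = k →
      ∃ a ∈ S1, ∃ b ∈ S2, G.Adj a b) :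
    ∃ u v, ∃ w : G.Walk u v, w.IsPath ∧ Fintype.card V + 2 ≤ w.support.length + 2 * k := by
  obtain ⟨S', T', U', hc, hnd, hcov, hSU, he, hcard⟩ :=
    dfs_aux' G (2 * Fintype.card V) ∅ [] univ
      (by simp) (List.isChain_nil) (List.nodup_nil)
      (fun v => Or.inr (Or.inr (mem_univ v))) (disjoint_bot_left) (by simp) (by simp)
      (by simp) (by simp)
  have hmk : S'.card < k := by
    by_contra hge
    push_neg at hge
    obtain ⟨S1, hS1sub, hS1⟩ := exists_subset_card_eq hge
    obtain ⟨S2, hS2sub, hS2⟩ := exists_subset_card_eq (hcard ▸ hge)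
    obtain ⟨a, ha, b, hb, hab⟩ := h S1 S2 (hSU.mono hS1sub hS2sub) hS1 hS2
    exact he a (hS1sub ha) b (hS2sub hb) hab
  have hcount : Fintype.card V ≤ S'.card + T'.length + U'.card := by
    have hsub : (univ : Finset V) ⊆ S' ∪ T'.toFinset ∪ U' := fun v _ => by
      rcases hcov v with h | h | h
      · exact mem_union_left _ (mem_union_left _ h)
      · exact mem_union_left _ (mem_union_right _ (List.mem_toFinset.mpr h))
      · exact mem_union_right _ h
    calc Fintype.card V = (univ : Finset V).card := (Finset.card_univ).symm
      _ ≤ (S' ∪ T'.toFinset ∪ U').card := card_le_card hsub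
      _ ≤ (S' ∪ T'.toFinset).card + U'.card := card_union_le _ _
      _ ≤ S'.card + T'.toFinset.card + U'.card := by
          have := card_union_le S' T'.toFinset; omega
      _ = S'.card + T'.length + U'.card := by rw [List.toFinset_card_of_nodup hnd]
  have hTlen : 2 ≤ T'.length := by omega
  match T', hc, hnd, hTlen, hcount with
  | a :: l, hc, hnd, _, hcount =>
    obtain ⟨v, w, hw⟩ := exists_walk_of_chain' G l a hc
    refine ⟨a, v, w, ?_, ?_⟩
    · rw [SimpleGraph.Walk.isPath_def, hw]; exact hnd
    · rw [hw]; simp at hcount ⊢; omega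

end DFS

section Cylinder

lemma cylinder_measure {n : ℕ} (μb : Measure Bool) [IsProbabilityMeasure μb]
    (S1 S2 : Finset (Fin n)) (hd : Disjoint S1 S2) :
    (Measure.pi fun _ : Sym2 (Fin n) => μb)
      {ω | ∀ u ∈ S1, ∀ v ∈ S2, ω s(u, v) = false}
      = μb {false} ^ (S1.card * S2.card) := by
  classical
  set T2 : Finset (Sym2 (Fin n)) := (S1 ×ˢ S2).image fun x => s(x.1, x.2) with hT2
  have hset : {ω : Sym2 (Fin n) → Bool | ∀ u ∈ S1, ∀ v ∈ S2, ω s(u, v) = false}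
      = Set.pi Set.univ (fun i => if i ∈ T2 then ({false} : Set Bool) else Set.univ) := by
    ext ω
    simp only [Set.mem_setOf_eq, Set.mem_pi, Set.mem_univ, forall_true_left]
    constructor
    · intro h i
      by_cases hi : i ∈ T2
      · simp only [hi, if_true, Set.mem_singleton_iff]
        obtain ⟨⟨u, v⟩, huv, rfl⟩ := Finset.mem_image.mp hi
        obtain ⟨hu, hv⟩ := Finset.mem_product.mp huv
        exact h u hu v hv
      · simp [hi]
    · intro h u hu v hv
      have := h s(u, v)
      rwa [if_pos (Finset.mem_image.mpr ⟨(u, v), Finset.mem_product.mpr ⟨hu, hv⟩, rfl⟩),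
        Set.mem_singleton_iff] at this
  have hTcard : T2.card = S1.card * S2.card := by
    rw [hT2, Finset.card_image_of_injOn, Finset.card_product]
    intro x hx y hy hxy
    simp only [Finset.coe_product, Set.mem_prod, Finset.mem_coe] at hx hy
    simp only [Sym2.eq_iff] at hxy
    rcases hxy with ⟨h1, h2⟩ | ⟨h1, h2⟩
    · exact Prod.ext h1 h2
    · have hx2 : x.1 ∈ S2 := by rw [h1]; exact hy.2
      exact (Finset.disjoint_left.mp hd hx.1 hx2).elim
  rw [hset, Measure.pi_pi]
  calc (∏ i : Sym2 (Fin n), μb (if i ∈ T2 then ({false} : Set Bool) else Set.univ))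
      = ∏ i : Sym2 (Fin n), (if i ∈ T2 then μb {false} else 1) := by
        refine Finset.prod_congr rfl fun i _ => ?_
        by_cases hi : i ∈ T2
        · rw [if_pos hi, if_pos hi]
        · rw [if_neg hi, if_neg hi]; exact measure_univ
    _ = ∏ i ∈ Finset.univ ∩ T2, μb {false} := Finset.prod_ite_mem _ _ _
    _ = μb {false} ^ T2.card := by rw [Finset.univ_inter, Finset.prod_const]
    _ = μb {false} ^ (S1.card * S2.card) := by rw [hTcard]

end Cylinder

lemma choose_le_12e {m k : ℕ} (h : m ≤ 12 * k) :
    (m.choose k : ℝ) ≤ (12 * Real.exp 1) ^ k := by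
  have hfact : (0 : ℝ) < (k.factorial : ℝ) := by positivity
  calc (m.choose k : ℝ) ≤ (m : ℝ) ^ k / k.factorial := Nat.choose_le_pow_div k m
    _ ≤ ((12 * k : ℕ) : ℝ) ^ k / k.factorial := by
        have : (m : ℝ) ^ k ≤ ((12 * k : ℕ) : ℝ) ^ k :=
          pow_le_pow_left₀ (Nat.cast_nonneg m) (by exact_mod_cast h) k
        exact div_le_div_of_nonneg_right this hfact.le
    _ = 12 ^ k * ((k : ℝ) ^ k / k.factorial) := by push_cast; ring
    _ ≤ 12 ^ k * Real.exp k := by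
        gcongr
        exact Real.pow_div_factorial_le_exp (x := (k : ℝ)) (Nat.cast_nonneg k) k
    _ = (12 * Real.exp 1) ^ k := by rw [mul_pow, Real.exp_one_pow]


set_option maxHeartbeats 1000000 in
/-- For `p ∈ (0,1)`, `c > 100`, `n = ⌈1.2c/p⌉` and `k = ⌈0.1c/p⌉`, in `G(n,p)`
(each potential edge present independently with probability `p`): the probability
that some two disjoint `k`-subsets have no edge between them is at most
`(n choose k)·(n−k choose k)·(1−p)^{k²} ≤ ((12e)²·e^{−0.1c})^k ≤ e^{−30}`;
consequently, with probability at least `1 − e^{−30}` the graph contains a simple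
path on at least `c/p` vertices. -/
theorem stmt_6 (p : NNReal) (hp0 : 0 < p) (hp1 : p < 1) (c : ℝ) (hc : 100 < c)
    (n k : ℕ) (hn : n = ⌈1.2 * c / (p : ℝ)⌉₊) (hk : k = ⌈0.1 * c / (p : ℝ)⌉₊) :
    (Measure.pi (fun _ : Sym2 (Fin n) => (PMF.bernoulli p (by exact_mod_cast hp1.le)).toMeasure))
        {ω | ∃ S1 S2 : Finset (Fin n), Disjoint S1 S2 ∧ S1.card = k ∧ S2.card = k ∧
          ∀ u ∈ S1, ∀ v ∈ S2, ω s(u, v) = false}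
      ≤ ENNReal.ofReal
          ((n.choose k : ℝ) * ((n - k).choose k : ℝ) * (1 - (p : ℝ)) ^ (k^2)) ∧
    (n.choose k : ℝ) * ((n - k).choose k : ℝ) * (1 - (p : ℝ)) ^ (k^2)
      ≤ ((12 * Real.exp 1)^2 * Real.exp (-0.1 * c)) ^ k ∧
    ((12 * Real.exp 1)^2 * Real.exp (-0.1 * c)) ^ k ≤ Real.exp (-30) ∧
    ENNReal.ofReal (1 - Real.exp (-30)) ≤
      (Measure.pi (fun _ : Sym2 (Fin n) => (PMF.bernoulli p (by exact_mod_cast hp1.le)).toMeasure))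
        {ω | ∃ (u v : Fin n)
            (w : (SimpleGraph.fromRel (fun a b => ω s(a, b) = true)).Walk u v),
          w.IsPath ∧ c / (p : ℝ) ≤ (w.support.length : ℝ)} := by
  classical
  have hp0' : (0:ℝ) < p := hp0
  have hp1' : (p:ℝ) < 1 := hp1
  have hc0 : (0:ℝ) < c := by linarith
  have hkge : 0.1 * c / (p:ℝ) ≤ (k:ℝ) := by rw [hk]; exact Nat.le_ceil _
  have hklt : (k:ℝ) < 0.1 * c / (p:ℝ) + 1 := by rw [hk]; exact Nat.ceil_lt_add_one (by positivity)
  have hnge : 1.2 * c / (p:ℝ) ≤ (n:ℝ) := by rw [hn]; exact Nat.le_ceil _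
  have hcp : 100 < c / (p:ℝ) := by
    have h1 : c ≤ c / (p:ℝ) := by rw [le_div_iff₀ hp0']; nlinarith
    linarith
  have hr1 : 0.1 * c / (p:ℝ) = 0.1 * (c / (p:ℝ)) := by ring
  have hr2 : 1.2 * c / (p:ℝ) = 1.2 * (c / (p:ℝ)) := by ring
  have h01cp : 10 < 0.1 * c / (p:ℝ) := by rw [hr1]; linarith
  have hk10 : 10 ≤ k := by
    have h10 : (10:ℝ) < (k:ℝ) := lt_of_lt_of_le h01cp hkge
    exact_mod_cast h10.le
  have hn12k : n ≤ 12 * k := by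
    rw [hn]; apply Nat.ceil_le.mpr
    push_cast
    linarith
  have h2kn : 2 * k ≤ n := by
    have h2kr : (2*k:ℝ) < (n:ℝ) := by rw [hr1] at hklt; rw [hr2] at hnge; push_cast; linarith
    have := h2kr.le
    exact_mod_cast this
  have hple : p ≤ 1 := by exact_mod_cast hp1.le
  have hfalse : (PMF.bernoulli p hple).toMeasure {false} = 1 - (p : ℝ≥0∞) := by
    rw [PMF.toMeasure_apply_singleton _ _ (measurableSet_singleton _), PMF.bernoulli_apply]; simp [ENNReal.coe_sub]
  have h1p : ENNReal.ofReal (1 - (p:ℝ)) = 1 - (p : ℝ≥0∞) := by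
    rw [← NNReal.coe_one, ← NNReal.coe_sub hp1.le, ENNReal.ofReal_coe_nnreal, ENNReal.coe_sub,
      ENNReal.coe_one]
  -- Part 1
  have part1 : (Measure.pi (fun _ : Sym2 (Fin n) => (PMF.bernoulli p (by exact_mod_cast hp1.le : p ≤ 1)).toMeasure))
        {ω | ∃ S1 S2 : Finset (Fin n), Disjoint S1 S2 ∧ S1.card = k ∧ S2.card = k ∧
          ∀ u ∈ S1, ∀ v ∈ S2, ω s(u, v) = false}
      ≤ ENNReal.ofReal
          ((n.choose k : ℝ) * ((n - k).choose k : ℝ) * (1 - (p : ℝ)) ^ (k^2)) := by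
    set μ := Measure.pi (fun _ : Sym2 (Fin n) => (PMF.bernoulli p hple).toMeasure) with hμ
    set Q : Finset (Finset (Fin n) × Finset (Fin n)) :=
      (Finset.univ.powersetCard k).biUnion
        (fun S1 => ((Finset.univ \ S1).powersetCard k).image (Prod.mk S1)) with hQ
    have hQcard : Q.card ≤ n.choose k * (n - k).choose k := by
      refine (Finset.card_biUnion_le).trans ?_
      calc ∑ S1 ∈ Finset.univ.powersetCard k,
            (((Finset.univ \ S1).powersetCard k).image (Prod.mk S1)).card
          ≤ ∑ _S1 ∈ (Finset.univ : Finset (Fin n)).powersetCard k, (n-k).choose k := by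
            refine Finset.sum_le_sum fun S1 hS1 => ?_
            refine (Finset.card_image_le).trans ?_
            rw [Finset.card_powersetCard, Finset.card_sdiff_of_subset (Finset.subset_univ S1),
              Finset.card_univ, Fintype.card_fin, (Finset.mem_powersetCard.mp hS1).2]
        _ = n.choose k * (n-k).choose k := by
            rw [Finset.sum_const, Finset.card_powersetCard, Finset.card_univ, Fintype.card_fin,
              smul_eq_mul]
    have hEsub : {ω : Sym2 (Fin n) → Bool | ∃ S1 S2 : Finset (Fin n), Disjoint S1 S2 ∧
          S1.card = k ∧ S2.card = k ∧ ∀ u ∈ S1, ∀ v ∈ S2, ω s(u, v) = false}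
        ⊆ ⋃ pr ∈ Q, {ω : Sym2 (Fin n) → Bool | ∀ u ∈ pr.1, ∀ v ∈ pr.2, ω s(u, v) = false} := by
      rintro ω ⟨S1, S2, hd, h1, h2, hω⟩
      refine Set.mem_iUnion₂.mpr ⟨(S1, S2), ?_, hω⟩
      rw [hQ]
      refine Finset.mem_biUnion.mpr ⟨S1, Finset.mem_powersetCard.mpr ⟨Finset.subset_univ _, h1⟩,
        Finset.mem_image.mpr ⟨S2, ?_, rfl⟩⟩
      exact Finset.mem_powersetCard.mpr
        ⟨Finset.subset_sdiff.mpr ⟨Finset.subset_univ _, hd.symm⟩, h2⟩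
    have hterm : ∀ pr ∈ Q,
        μ {ω : Sym2 (Fin n) → Bool | ∀ u ∈ pr.1, ∀ v ∈ pr.2, ω s(u, v) = false}
          = (1 - (p:ℝ≥0∞))^(k^2) := by
      intro pr hpr
      rw [hQ] at hpr
      obtain ⟨S1, hS1, hpr⟩ := Finset.mem_biUnion.mp hpr
      obtain ⟨S2, hS2, rfl⟩ := Finset.mem_image.mp hpr
      obtain ⟨hsub2, hc2⟩ := Finset.mem_powersetCard.mp hS2
      have hd : Disjoint S1 S2 := (Finset.subset_sdiff.mp hsub2).2.symm
      rw [hμ, cylinder_measure _ S1 S2 hd, hfalse, (Finset.mem_powersetCard.mp hS1).2, hc2, sq]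
    calc μ _ ≤ μ (⋃ pr ∈ Q, {ω : Sym2 (Fin n) → Bool |
            ∀ u ∈ pr.1, ∀ v ∈ pr.2, ω s(u, v) = false}) := measure_mono hEsub
      _ ≤ ∑ pr ∈ Q, μ {ω : Sym2 (Fin n) → Bool |
            ∀ u ∈ pr.1, ∀ v ∈ pr.2, ω s(u, v) = false} := measure_biUnion_finset_le Q _
      _ = ∑ _pr ∈ Q, (1 - (p:ℝ≥0∞))^(k^2) := Finset.sum_congr rfl hterm
      _ = (Q.card : ℝ≥0∞) * (1 - (p:ℝ≥0∞))^(k^2) := by rw [Finset.sum_const, nsmul_eq_mul]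
      _ ≤ ((n.choose k * (n - k).choose k : ℕ) : ℝ≥0∞) * (1 - (p:ℝ≥0∞))^(k^2) :=
          mul_le_mul_left (by exact_mod_cast hQcard) _
      _ = ENNReal.ofReal ((n.choose k : ℝ) * ((n - k).choose k : ℝ) * (1 - (p : ℝ)) ^ (k^2)) := by
          rw [ENNReal.ofReal_mul (by positivity), ENNReal.ofReal_pow (by linarith),
            ENNReal.ofReal_mul (Nat.cast_nonneg _), h1p, ENNReal.ofReal_natCast,
            ENNReal.ofReal_natCast]
          push_cast
          ring
  -- Part 2
  have hpk : 0.1 * c ≤ (p:ℝ) * k := by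
    rw [div_le_iff₀ hp0'] at hkge; linarith
  have part2 : (n.choose k : ℝ) * ((n - k).choose k : ℝ) * (1 - (p : ℝ)) ^ (k^2)
      ≤ ((12 * Real.exp 1)^2 * Real.exp (-0.1 * c)) ^ k := by
    have e1 : (n.choose k : ℝ) ≤ (12 * Real.exp 1)^k := choose_le_12e hn12k
    have e2 : ((n-k).choose k : ℝ) ≤ (12 * Real.exp 1)^k :=
      choose_le_12e ((Nat.sub_le n k).trans hn12k)
    have e3 : (1-(p:ℝ))^(k^2) ≤ Real.exp (-0.1*c)^k := by
      have h1 : (1-(p:ℝ)) ≤ Real.exp (-(p:ℝ)) := by linarith [Real.add_one_le_exp (-(p:ℝ))]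
      have h2 : (1-(p:ℝ))^(k^2) ≤ Real.exp (-(p:ℝ))^(k^2) := pow_le_pow_left₀ (by linarith) h1 _
      refine h2.trans ?_
      rw [← Real.exp_nat_mul, ← Real.exp_nat_mul]
      apply Real.exp_le_exp.mpr
      push_cast
      nlinarith [hpk, Nat.cast_nonneg (α := ℝ) k]
    calc (n.choose k : ℝ) * ((n - k).choose k : ℝ) * (1 - (p : ℝ)) ^ (k^2)
        ≤ ((12 * Real.exp 1)^k * (12 * Real.exp 1)^k) * Real.exp (-0.1*c)^k := by
          refine mul_le_mul (mul_le_mul e1 e2 (Nat.cast_nonneg _) (by positivity))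
            e3 (pow_nonneg (by linarith) _) (by positivity)
      _ = ((12 * Real.exp 1)^2 * Real.exp (-0.1 * c)) ^ k := by
          ring_nf
          rw [show (144:ℝ) = 12^2 by norm_num, ← pow_mul, Nat.mul_comm]

  -- Part 3
  have part3 : ((12 * Real.exp 1)^2 * Real.exp (-0.1 * c)) ^ k ≤ Real.exp (-30) := by
    have hbase : (12 * Real.exp 1)^2 * Real.exp (-0.1*c) ≤ Real.exp (-3) := by
      have h144 : (144:ℝ) ≤ Real.exp 5 := by
        have h := Real.exp_one_gt_d9
        calc (144:ℝ) ≤ 2.7182818283^5 := by norm_num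
          _ ≤ Real.exp 1 ^ 5 := pow_le_pow_left₀ (by norm_num) h.le 5
          _ = Real.exp 5 := by rw [Real.exp_one_pow]; norm_cast
      calc (12 * Real.exp 1)^2 * Real.exp (-0.1*c)
          = 144 * (Real.exp 1 ^ 2 * Real.exp (-0.1*c)) := by ring
        _ ≤ Real.exp 5 * (Real.exp 1 ^ 2 * Real.exp (-0.1*c)) := by
            have hpos : (0:ℝ) < Real.exp 1 ^ 2 * Real.exp (-0.1*c) := by positivity
            nlinarith
        _ = Real.exp (5 + 2 + -0.1*c) := by
            have h2 : Real.exp 1 ^ 2 = Real.exp (2:ℕ) := Real.exp_one_pow 2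
            rw [h2, Real.exp_add, Real.exp_add]
            norm_num
            ring
        _ ≤ Real.exp (-3) := Real.exp_le_exp.mpr (by linarith)
    have h0 : (0:ℝ) ≤ (12 * Real.exp 1)^2 * Real.exp (-0.1*c) := by positivity
    calc ((12 * Real.exp 1)^2 * Real.exp (-0.1 * c)) ^ k ≤ Real.exp (-3) ^ k :=
        pow_le_pow_left₀ h0 hbase k
      _ = Real.exp ((k:ℝ) * (-3)) := (Real.exp_nat_mul _ k).symm
      _ ≤ Real.exp (-30) := by
          apply Real.exp_le_exp.mpr
          have hkr : (10:ℝ) ≤ (k:ℝ) := by exact_mod_cast hk10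
          linarith
  refine ⟨part1, part2, part3, ?_⟩
  -- Part 4
  set μ := Measure.pi (fun _ : Sym2 (Fin n) => (PMF.bernoulli p hple).toMeasure) with hμ
  set E : Set (Sym2 (Fin n) → Bool) := {ω | ∃ S1 S2 : Finset (Fin n), Disjoint S1 S2 ∧
    S1.card = k ∧ S2.card = k ∧ ∀ u ∈ S1, ∀ v ∈ S2, ω s(u, v) = false} with hE
  set Ep : Set (Sym2 (Fin n) → Bool) := {ω | ∃ (u v : Fin n)
      (w : (SimpleGraph.fromRel (fun a b => ω s(a, b) = true)).Walk u v),
    w.IsPath ∧ c / (p : ℝ) ≤ (w.support.length : ℝ)} with hEp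
  have hcover : E ∪ Ep = Set.univ := by
    rw [Set.eq_univ_iff_forall]
    intro ω
    by_cases hEm : ω ∈ E
    · exact Or.inl hEm
    refine Or.inr ?_
    rw [hE, Set.mem_setOf_eq] at hEm
    push_neg at hEm
    have hH : ∀ S1 S2 : Finset (Fin n), Disjoint S1 S2 → S1.card = k → S2.card = k →
        ∃ a ∈ S1, ∃ b ∈ S2,
          (SimpleGraph.fromRel fun a b => ω s(a, b) = true).Adj a b := by
      intro S1 S2 hd h1 h2
      obtain ⟨a, ha, b, hb, hne⟩ := hEm S1 S2 hd h1 h2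
      have htrue : ω s(a, b) = true := by
        revert hne; cases (ω s(a, b)) <;> simp
      refine ⟨a, ha, b, hb, (SimpleGraph.fromRel_adj _ a b).mpr ⟨?_, Or.inl htrue⟩⟩
      intro heq
      exact Finset.disjoint_left.mp hd ha (heq ▸ hb)
    obtain ⟨u, v, w, hw, hlen⟩ := long_path_of_k'
      (SimpleGraph.fromRel fun a b => ω s(a, b) = true) k
      (by rw [Fintype.card_fin]; exact h2kn) hH
    rw [Fintype.card_fin] at hlen
    refine ⟨u, v, w, hw, ?_⟩
    have hcast : (n:ℝ) + 2 ≤ (w.support.length : ℝ) + 2*k := by exact_mod_cast hlen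
    rw [hr1] at hklt; rw [hr2] at hnge
    have hdiv : 1.2 * (c / (p:ℝ)) - 0.2 * (c / (p:ℝ)) = c / (p:ℝ) := by ring
    linarith
  have hone : (1:ℝ≥0∞) ≤ μ E + μ Ep := by
    calc (1:ℝ≥0∞) = μ Set.univ := measure_univ.symm
      _ = μ (E ∪ Ep) := by rw [hcover]
      _ ≤ μ E + μ Ep := measure_union_le E Ep
  have hEbound : μ E ≤ ENNReal.ofReal (Real.exp (-30)) :=
    part1.trans (ENNReal.ofReal_le_ofReal (part2.trans part3))
  rw [ENNReal.ofReal_sub _ (Real.exp_pos _).le, ENNReal.ofReal_one]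
  refine tsub_le_iff_right.mpr ?_
  calc (1:ℝ≥0∞) ≤ μ E + μ Ep := hone
    _ ≤ ENNReal.ofReal (Real.exp (-30)) + μ Ep := add_le_add_left hEbound _
    _ = μ Ep + ENNReal.ofReal (Real.exp (-30)) := add_comm _ _
end
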